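/- Let ℓ be differentiable with L-Lipschitz gradient and ∇ℓ(w) ≠ 0. Then the single-step ascent point w + ρ·∇ℓ(w)/‖∇ℓ(w)‖ achieves a loss within Lρ² of the maximum of ℓ over the closed ball of radius ρ around w: max_{‖δ‖≤ρ} ℓ(w+δ) − ℓ(w + ρ∇ℓ(w)/‖∇ℓ(w)‖) ≤ L ρ². -/

import Mathlib

open Metric InnerProductSpace intervalIntegral

local notation "⟪" x ", " y "⟫" => @inner ℝ _ _ x y

lemma line_deriv {k : ℕ} (ℓ : EuclideanSpace ℝ (Fin k) → ℝ) (hdiff : Differentiable ℝ ℓ)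
    (x v : EuclideanSpace ℝ (Fin k)) (t : ℝ) :
    HasDerivAt (fun s : ℝ => ℓ (x + s • v)) ⟪gradient ℓ (x + t • v), v⟫ t := by
  have h1 : HasDerivAt (fun s : ℝ => x + s • v) v t := by
    exact ((hasDerivAt_const t x).add ((hasDerivAt_id t).smul_const v)).congr_deriv (by simp)
  have h2 := (hdiff (x + t • v)).hasGradientAt.hasFDerivAt
  have := h2.comp_hasDerivAt t h1
  exact this

lemma descent {k : ℕ} (ℓ : EuclideanSpace ℝ (Fin k) → ℝ) (hdiff : Differentiable ℝ ℓ)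
    (Lc : NNReal) (hlip : LipschitzWith Lc (gradient ℓ)) (x v : EuclideanSpace ℝ (Fin k)) :
    |ℓ (x + v) - ℓ x - ⟪gradient ℓ x, v⟫| ≤ (Lc : ℝ) / 2 * ‖v‖ ^ 2 := by
  have hcont : Continuous (fun t : ℝ => ⟪gradient ℓ (x + t • v), v⟫) := by
    exact (Continuous.inner (hlip.continuous.comp (by continuity)) continuous_const)
  have hint : ℓ (x + v) - ℓ x = ∫ t in (0:ℝ)..1, ⟪gradient ℓ (x + t • v), v⟫ := by
    rw [intervalIntegral.integral_eq_sub_of_hasDerivAt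
      (fun t _ => line_deriv ℓ hdiff x v t) (hcont.intervalIntegrable 0 1)]
    simp
  have hconst : ⟪gradient ℓ x, v⟫ = ∫ t in (0:ℝ)..1, ⟪gradient ℓ x, v⟫ := by simp
  rw [hint, hconst, ← intervalIntegral.integral_sub (hcont.intervalIntegrable 0 1)
    (intervalIntegrable_const)]
  have hbound : ∀ t ∈ Set.uIcc (0:ℝ) 1,
      |⟪gradient ℓ (x + t • v), v⟫ - ⟪gradient ℓ x, v⟫| ≤ (Lc : ℝ) * t * ‖v‖ ^ 2 := by
    intro t ht
    rw [Set.uIcc_of_le (by norm_num)] at ht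
    have := hlip (x + t • v) x
    rw [edist_dist, edist_dist, dist_eq_norm, dist_eq_norm] at this
    have hd : ‖gradient ℓ (x + t • v) - gradient ℓ x‖ ≤ (Lc : ℝ) * (t * ‖v‖) := by
      have h2 : dist (gradient ℓ (x + t • v)) (gradient ℓ x) ≤ (Lc:ℝ) * dist (x + t • v) x :=
        hlip.dist_le_mul _ _
      rw [dist_eq_norm, dist_eq_norm] at h2
      calc ‖gradient ℓ (x + t • v) - gradient ℓ x‖ ≤ (Lc:ℝ) * ‖x + t • v - x‖ := h2
        _ = (Lc : ℝ) * (t * ‖v‖) := by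
            rw [add_sub_cancel_left, norm_smul, Real.norm_eq_abs, abs_of_nonneg ht.1]
    calc |⟪gradient ℓ (x + t • v), v⟫ - ⟪gradient ℓ x, v⟫|
        = |⟪gradient ℓ (x + t • v) - gradient ℓ x, v⟫| := by rw [inner_sub_left]
      _ ≤ ‖gradient ℓ (x + t • v) - gradient ℓ x‖ * ‖v‖ := abs_real_inner_le_norm _ _
      _ ≤ ((Lc : ℝ) * (t * ‖v‖)) * ‖v‖ := by
          apply mul_le_mul_of_nonneg_right hd (norm_nonneg _)
      _ = (Lc : ℝ) * t * ‖v‖ ^ 2 := by ring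
  calc |∫ t in (0:ℝ)..1, (⟪gradient ℓ (x + t • v), v⟫ - ⟪gradient ℓ x, v⟫)|
      ≤ ∫ t in (0:ℝ)..1, (Lc : ℝ) * t * ‖v‖ ^ 2 := by
        apply intervalIntegral.abs_integral_le_integral_abs (by norm_num) |>.trans
        apply intervalIntegral.integral_mono_on (by norm_num)
        · exact ((hcont.sub continuous_const).abs).intervalIntegrable 0 1
        · exact (Continuous.intervalIntegrable (by continuity) 0 1)
        · intro t ht
          exact hbound t (by rw [Set.uIcc_of_le (by norm_num)]; exact ht)
    _ = (Lc : ℝ) / 2 * ‖v‖ ^ 2 := by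
        rw [show (fun t : ℝ => (Lc:ℝ) * t * ‖v‖ ^ 2) = fun t : ℝ => ((Lc:ℝ) * ‖v‖ ^ 2) * t
          from by ext t; ring, intervalIntegral.integral_const_mul, integral_id]
        ring

theorem stmt_3 {k : ℕ} (ℓ : EuclideanSpace ℝ (Fin k) → ℝ) (hdiff : Differentiable ℝ ℓ)
    (Lc : NNReal) (hlip : LipschitzWith Lc (gradient ℓ))
    (w : EuclideanSpace ℝ (Fin k)) (ρ : ℝ) (hρ : 0 < ρ) (hg : gradient ℓ w ≠ 0) :
    sSup ((fun δ => ℓ (w + δ)) '' closedBall (0 : EuclideanSpace ℝ (Fin k)) ρ) -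
      ℓ (w + ρ • (‖gradient ℓ w‖⁻¹ • gradient ℓ w)) ≤ (Lc : ℝ) * ρ ^ 2 := by
  set g := gradient ℓ w with hgdef
  set u := ρ • (‖g‖⁻¹ • g) with hudef
  have hgn : 0 < ‖g‖ := norm_pos_iff.mpr hg
  have hnu : ‖u‖ = ρ := by
    rw [hudef, norm_smul, norm_smul, norm_inv, norm_norm, Real.norm_eq_abs,
      abs_of_pos hρ, inv_mul_cancel₀ (ne_of_gt hgn), mul_one]
  have hgu : ⟪g, u⟫ = ρ * ‖g‖ := by
    rw [hudef, real_inner_smul_right, real_inner_smul_right,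
      real_inner_self_eq_norm_sq]
    field_simp
  have hlower : ℓ w + ⟪g, u⟫ - (Lc : ℝ) / 2 * ρ ^ 2 ≤ ℓ (w + u) := by
    have := descent ℓ hdiff Lc hlip w u
    rw [abs_le] at this
    have h1 := this.1
    rw [hnu] at h1
    linarith
  rw [sub_le_iff_le_add]
  apply csSup_le
  · exact ⟨ℓ (w + 0), ⟨0, mem_closedBall_self (le_of_lt hρ), rfl⟩⟩
  · rintro y ⟨δ, hδ, rfl⟩
    rw [mem_closedBall, dist_zero_right] at hδ
    have hupper : ℓ (w + δ) ≤ ℓ w + ⟪g, δ⟫ + (Lc : ℝ) / 2 * ρ ^ 2 := by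
      have := descent ℓ hdiff Lc hlip w δ
      rw [abs_le] at this
      have h2 := this.2
      rw [← hgdef] at h2
      have hsq : ‖δ‖ ^ 2 ≤ ρ ^ 2 := by
        apply sq_le_sq' (by linarith [norm_nonneg δ]) hδ
      have h3 : (Lc : ℝ)/2 * ‖δ‖ ^ 2 ≤ (Lc : ℝ)/2 * ρ ^ 2 :=
        mul_le_mul_of_nonneg_left hsq (by positivity)
      linarith
    have hip : ⟪g, δ⟫ ≤ ⟪g, u⟫ := by
      rw [hgu]
      calc ⟪g, δ⟫ ≤ ‖g‖ * ‖δ‖ := real_inner_le_norm g δ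
        _ ≤ ‖g‖ * ρ := by apply mul_le_mul_of_nonneg_left hδ (norm_nonneg g)
        _ = ρ * ‖g‖ := mul_comm _ _
    linarith
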